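/- The algebra 𝔠₇₂ on ℂ⁵ with nonzero basis products e₁e₁ = e₄, e₂e₂ = e₅, e₂e₃ = e₄ + e₅, e₄e₄ = e₅ is a nilpotent commutative algebra (A⁶ = 0) that satisfies the almost-Jordan identity 2·(((y·x)·x)·x) + y·((x·x)·x) = 3·((y·(x·x))·x) for all x, y, but does not satisfy the Jordan identity: there exist x, y with ((x·x)·y)·x ≠ (x·x)·(y·x). -/
import Mathlib


/-- `IsProdOf μ n z` says that `z` is a product of `n` elements under the
multiplication `μ`, with some arrangement of parentheses. -/
inductive IsProdOf {V : Type*} (μ : V → V → V) : ℕ → V → Prop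
  | base (x : V) : IsProdOf μ 1 x
  | mul {m n : ℕ} {a b : V} :
      IsProdOf μ m a → IsProdOf μ n b → IsProdOf μ (m + n) (μ a b)

/-- Structure constants of the algebra 𝔠₇₂ (e₁e₁ = e₄, e₂e₂ = e₅, e₂e₃ = e₄ + e₅, e₄e₄ = e₅) on ℂ⁵ (basis `e₁, …, e₅` indexed by `Fin 5`),
extended symmetrically; unlisted products of basis vectors are zero. -/
noncomputable def tbl72 : Fin 5 → Fin 5 → Fin 5 → ℂ :=
  ![![![0,0,0,1,0], 0, 0, 0, 0],
    ![0, ![0,0,0,0,1], ![0,0,0,1,1], 0, 0],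
    ![0, ![0,0,0,1,1], 0, 0, 0],
    ![0, 0, 0, ![0,0,0,0,1], 0],
    0]

/-- The bilinear multiplication of the algebra on ℂ⁵. -/
noncomputable def mul72 (x y : Fin 5 → ℂ) : Fin 5 → ℂ :=
  fun k => ∑ i, ∑ j, x i * y j * tbl72 i j k

lemma mul72_def (x y : Fin 5 → ℂ) :
    mul72 x y = ![0, 0, 0, x 0 * y 0 + x 1 * y 2 + x 2 * y 1,
      x 1 * y 1 + x 1 * y 2 + x 2 * y 1 + x 3 * y 3] := by
  funext k
  fin_cases k <;>
    simp [mul72, tbl72, Fin.sum_univ_five, Matrix.vecHead, Matrix.vecTail] <;> ring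

lemma isProdOf_pos {V : Type*} {μ : V → V → V} {n : ℕ} {z : V}
    (h : IsProdOf μ n z) : 1 ≤ n := by
  induction h with
  | base => exact le_refl 1
  | mul _ _ ih1 ih2 => omega

lemma prod_struct {n : ℕ} {z : Fin 5 → ℂ} (h : IsProdOf mul72 n z) :
    (2 ≤ n → z 0 = 0 ∧ z 1 = 0 ∧ z 2 = 0) ∧
    (3 ≤ n → z 0 = 0 ∧ z 1 = 0 ∧ z 2 = 0 ∧ z 3 = 0) ∧
    (5 ≤ n → z = 0) := by
  induction h with
  | base x => refine ⟨fun h => absurd h (by omega), fun h => absurd h (by omega),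
      fun h => absurd h (by omega)⟩
  | @mul m n a b ha hb ih1 ih2 =>
    have hm := isProdOf_pos ha
    have hn := isProdOf_pos hb
    have h2 : ∀ k, mul72 a b k = ![0, 0, 0, a 0 * b 0 + a 1 * b 2 + a 2 * b 1,
        a 1 * b 1 + a 1 * b 2 + a 2 * b 1 + a 3 * b 3] k := fun k => by
      rw [mul72_def]
    refine ⟨fun _ => ⟨h2 0, h2 1, h2 2⟩, fun h3 => ?_, fun h5 => ?_⟩
    · refine ⟨h2 0, h2 1, h2 2, ?_⟩
      rcases (by omega : 2 ≤ m ∨ 2 ≤ n) with hc | hc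
      · obtain ⟨e0, e1, e2⟩ := ih1.1 hc
        rw [h2 3]; simp [e0, e1, e2]
      · obtain ⟨e0, e1, e2⟩ := ih2.1 hc
        rw [h2 3]; simp [e0, e1, e2]
    · rcases (by omega : 3 ≤ m ∨ 3 ≤ n) with hc | hc
      · obtain ⟨e0, e1, e2, e3⟩ := ih1.2.1 hc
        funext k
        rw [h2 k, e0, e1, e2, e3]
        fin_cases k <;> simp
      · obtain ⟨e0, e1, e2, e3⟩ := ih2.2.1 hc
        funext k
        rw [h2 k, e0, e1, e2, e3]
        fin_cases k <;> simp

/-- The algebra is nilpotent (A⁶ = 0), commutative, satisfies the almost-Jordan identity, but does not satisfy the Jordan identity. -/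
theorem c72_properties :
    (∀ x y : Fin 5 → ℂ, mul72 x y = mul72 y x) ∧
    (∀ z : Fin 5 → ℂ, IsProdOf (mul72) 6 z → z = 0) ∧
    (∀ x y : Fin 5 → ℂ,
        (2 : ℂ) • mul72 (mul72 (mul72 y x) x) x + mul72 y (mul72 (mul72 x x) x) =
          (3 : ℂ) • mul72 (mul72 y (mul72 x x)) x) ∧
    (∃ x y : Fin 5 → ℂ,
        mul72 (mul72 (mul72 x x) y) x ≠ mul72 (mul72 x x) (mul72 y x)) := by
  refine ⟨?_, ?_, ?_, ?_⟩
  · intro x y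
    rw [mul72_def, mul72_def]
    funext k; fin_cases k <;> simp <;> ring
  · intro z hz
    exact (prod_struct hz).2.2 (by omega)
  · intro x y
    funext k
    simp only [mul72_def]
    fin_cases k <;> simp [Matrix.smul_cons] <;> ring
  · refine ⟨![1,1,0,0,0], ![0,0,1,0,0], fun h => ?_⟩
    have := congrFun h 4
    simp [mul72_def, Matrix.cons_val_one] at this
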